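/- Let r be the regular paperfolding sequence (r_m = 1 if m ∈ R = {(4k+1)*2^n - 1 : n,k >= 0}, else 0). For every k >= 1, the t-Hankel determinant H_k(r,t) — the determinant of the k×k matrix with (i,j)-entry r_{i+j}*t if i=j and r_{i+j} otherwise — is a polynomial in t of degree at most 3. -/

import Mathlib

open Polynomial

open scoped Classical

/-- `R = {(4k+1)·2^n − 1 : n, k ≥ 0}`. -/
def Rset : Set ℕ := {m | ∃ n k : ℕ, (4 * k + 1) * 2 ^ n - 1 = m}

/-- The regular paperfolding sequence: the indicator sequence of `R`. -/
noncomputable def paperfolding (m : ℕ) : ℤ := if m ∈ Rset then 1 else 0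

lemma pf_two_mul (m : ℕ) : paperfolding (2 * m) = if m % 2 = 0 then 1 else 0 := by
  unfold paperfolding
  congr 1
  simp only [eq_iff_iff]
  constructor
  · rintro ⟨n, k, h⟩
    rcases n with _ | n
    · simp at h; omega
    · exfalso
      have h2 : (2:ℕ)^(n+1) = 2 * 2^n := by ring
      rw [h2] at h
      have hp : 1 ≤ (4*k+1) * 2^n := Nat.one_le_iff_ne_zero.mpr (by positivity)
      set q := (4*k+1) * 2^n with hq
      have : (4*k+1) * (2 * 2^n) = 2 * q := by rw [hq]; ring
      rw [this] at h
      omega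
  · intro hm
    exact ⟨0, m/2, by simp; omega⟩

lemma pf_odd_sum {i j : ℕ} (hi : i % 2 = 1) (hj : j % 2 = 1) :
    paperfolding (i + j) = if (i + j) % 4 = 0 then 1 else 0 := by
  have : i + j = 2 * ((i+j)/2) := by omega
  rw [this, pf_two_mul]
  congr 1
  simp only [eq_iff_iff]; omega

lemma pf_diag {i : ℕ} (hi : i % 2 = 1) : paperfolding (i + i) = 0 := by
  have : i + i = 2 * i := by omega
  rw [this, pf_two_mul, if_neg (by omega)]


lemma card_odd (k : ℕ) : Fintype.card {i : Fin k // (i:ℕ) % 2 = 1} = k / 2 := by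
  have e : {i : Fin k // (i:ℕ) % 2 = 1} ≃ Fin (k / 2) :=
    { toFun := fun i => ⟨(i:ℕ)/2, by have := i.1.2; have := i.2; omega⟩
      invFun := fun j => ⟨⟨2*j+1, by have := j.2; omega⟩, by simp only [Fin.val_mk]; omega⟩
      left_inv := by
        rintro ⟨⟨i, hi⟩, h⟩; apply Subtype.ext; apply Fin.ext
        simp only [Fin.val_mk] at h ⊢; omega
      right_inv := by
        rintro ⟨j, hj⟩; apply Fin.ext; simp only [Fin.val_mk]; omega }
  rw [Fintype.card_congr e, Fintype.card_fin]

lemma card_even (k : ℕ) : Fintype.card {i : Fin k // (i:ℕ) % 2 = 0} = k - k / 2 := by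
  have e : {i : Fin k // (i:ℕ) % 2 = 0} ≃ Fin (k - k / 2) :=
    { toFun := fun i => ⟨(i:ℕ)/2, by have := i.1.2; have := i.2; omega⟩
      invFun := fun j => ⟨⟨2*j, by have := j.2; omega⟩, by simp only [Fin.val_mk]; omega⟩
      left_inv := by
        rintro ⟨⟨i, hi⟩, h⟩; apply Subtype.ext; apply Fin.ext
        simp only [Fin.val_mk] at h ⊢; omega
      right_inv := by
        rintro ⟨j, hj⟩; apply Fin.ext; simp only [Fin.val_mk]; omega }
  rw [Fintype.card_congr e, Fintype.card_fin]

lemma exists_relation (k : ℕ) (s : Finset (Fin k)) (hcard : 4 ≤ s.card)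
    (hev : ∀ i ∈ s, (i:ℕ) % 2 = 0) :
    ∃ c : Fin k → ℚ, c ≠ 0 ∧ (∀ i : Fin k, (i:ℕ) % 2 = 0 → c i = 0) ∧
      (∑ i : Fin k, if (i:ℕ) % 4 = 1 then c i else 0) = 0 ∧
      (∑ i : Fin k, if (i:ℕ) % 4 = 3 then c i else 0) = 0 ∧
      ∀ j : Fin k, (j:ℕ) % 2 = 0 → j ∉ s →
        (∑ i : Fin k, c i * (paperfolding ((i:ℕ)+(j:ℕ)) : ℚ)) = 0 := by
  have hsub : s ⊆ Finset.univ.filter (fun j : Fin k => (j:ℕ) % 2 = 0) := by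
    intro i hi; simp [hev i hi]
  have hcardE : Fintype.card {j : Fin k // (j:ℕ) % 2 = 0 ∧ j ∉ s} = (k - k/2) - s.card := by
    have h1 : Fintype.card {j : Fin k // (j:ℕ) % 2 = 0 ∧ j ∉ s} =
        (Finset.univ.filter (fun j : Fin k => (j:ℕ) % 2 = 0 ∧ j ∉ s)).card :=
      Fintype.card_subtype _
    have h2 : (Finset.univ.filter (fun j : Fin k => (j:ℕ) % 2 = 0 ∧ j ∉ s))
        = (Finset.univ.filter (fun j : Fin k => (j:ℕ) % 2 = 0)) \ s := by
      ext j
      simp only [Finset.mem_filter, Finset.mem_sdiff, Finset.mem_univ, true_and]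
    have h3 : (Finset.univ.filter (fun j : Fin k => (j:ℕ) % 2 = 0)).card = k - k/2 := by
      rw [← Fintype.card_subtype]; exact card_even k
    rw [h1, h2, Finset.card_sdiff_of_subset hsub, h3]
  have hcards : s.card ≤ k - k/2 := by
    calc s.card ≤ _ := Finset.card_le_card hsub
    _ = k - k/2 := by rw [← Fintype.card_subtype]; exact card_even k
  set F : Matrix {i : Fin k // (i:ℕ) % 2 = 1}
      (Fin 2 ⊕ {j : Fin k // (j:ℕ) % 2 = 0 ∧ j ∉ s}) ℚ := fun i cnd =>
    Sum.elim (fun t : Fin 2 => if ((i:Fin k):ℕ) % 4 = 2*(t:ℕ)+1 then (1:ℚ) else 0)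
      (fun j => (paperfolding (((i:Fin k):ℕ) + ((j : {j : Fin k // (j:ℕ) % 2 = 0 ∧ j ∉ s}) :Fin k)) : ℚ)) cnd with hF
  have hlt : Fintype.card (Fin 2 ⊕ {j : Fin k // (j:ℕ) % 2 = 0 ∧ j ∉ s})
      < Fintype.card {i : Fin k // (i:ℕ) % 2 = 1} := by
    rw [Fintype.card_sum, Fintype.card_fin, hcardE, card_odd]
    omega
  have hninj : ¬ Function.Injective F.vecMulLinear := by
    intro hinj
    have h4 := LinearMap.finrank_le_finrank_of_injective hinj
    rw [Module.finrank_fintype_fun_eq_card, Module.finrank_fintype_fun_eq_card] at h4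
    omega
  rw [Function.not_injective_iff] at hninj
  obtain ⟨x, y, hxy, hne⟩ := hninj
  have hc0ne : x - y ≠ 0 := sub_ne_zero_of_ne hne
  have hrel : Matrix.vecMul (x - y) F = 0 := by
    have h5 : F.vecMulLinear (x - y) = 0 := by rw [map_sub, hxy, sub_self]
    exact h5
  set c0 : {i : Fin k // (i:ℕ) % 2 = 1} → ℚ := x - y with hc0
  set c : Fin k → ℚ := fun i => if h : (i:ℕ) % 2 = 1 then c0 ⟨i, h⟩ else 0 with hc
  have hcval : ∀ (i : Fin k) (h : (i:ℕ) % 2 = 1), c i = c0 ⟨i, h⟩ := by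
    intro i h; rw [hc]; exact dif_pos h
  have hcval0 : ∀ i : Fin k, (i:ℕ) % 2 = 0 → c i = 0 := by
    intro i h; rw [hc]; exact dif_neg (by omega)
  have conv1 : ∀ (f : Fin k → ℚ), (∀ i : Fin k, (i:ℕ) % 2 = 0 → f i = 0) →
      ∑ i : Fin k, f i = ∑ i : {i : Fin k // (i:ℕ) % 2 = 1}, f i.1 := by
    intro f hf
    have h1 : ∑ i : Fin k, f i
        = ∑ i ∈ Finset.univ.filter (fun i : Fin k => (i:ℕ) % 2 = 1), f i := by
      symm
      apply Finset.sum_subset (Finset.filter_subset _ _)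
      intro i _ hi
      simp only [Finset.mem_filter, Finset.mem_univ, true_and] at hi
      exact hf i (by omega)
    rw [h1, Finset.sum_subtype (p := fun i : Fin k => (i:ℕ) % 2 = 1) _ (fun x => by simp) f]
  refine ⟨c, ?_, hcval0, ?_, ?_, ?_⟩
  · intro h0
    obtain ⟨i0, hi0⟩ := Function.ne_iff.mp hc0ne
    apply hi0
    have h6 : c i0.1 = 0 := by rw [h0]; rfl
    rw [hcval i0.1 i0.2] at h6
    simpa using h6
  · have h := congrFun hrel (Sum.inl 0)
    simp only [Matrix.vecMul, dotProduct, hF, Sum.elim_inl, Pi.zero_apply,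
      Fin.val_zero, Nat.mul_zero, Nat.zero_add] at h
    rw [conv1 _ (fun i hi => by rw [if_neg (by omega)])]
    have hcong : (∑ i : {i : Fin k // (i:ℕ) % 2 = 1},
        if ((i:Fin k):ℕ) % 4 = 1 then c i.1 else 0)
        = ∑ i : {i : Fin k // (i:ℕ) % 2 = 1}, c0 i * (if ((i:Fin k):ℕ) % 4 = 1 then 1 else 0) := by
      apply Finset.sum_congr rfl
      rintro ⟨i, hi⟩ _
      rw [hcval i hi]
      by_cases h4 : (i:ℕ) % 4 = 1 <;> simp [h4]
    rw [hcong]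
    exact h
  · have h := congrFun hrel (Sum.inl 1)
    simp only [Matrix.vecMul, dotProduct, hF, Sum.elim_inl, Pi.zero_apply,
      Fin.val_one, Nat.mul_one] at h
    norm_num at h
    rw [conv1 _ (fun i hi => by rw [if_neg (by omega)])]
    have hcong : (∑ i : {i : Fin k // (i:ℕ) % 2 = 1},
        if ((i:Fin k):ℕ) % 4 = 3 then c i.1 else 0)
        = ∑ i : {i : Fin k // (i:ℕ) % 2 = 1}, (if ((i:Fin k):ℕ) % 4 = 3 then c0 i else 0) := by
      apply Finset.sum_congr rfl
      rintro ⟨i, hi⟩ _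
      rw [hcval i hi]
    rw [hcong]
    exact h
  · intro j hj hjs
    have h := congrFun hrel (Sum.inr ⟨j, hj, hjs⟩)
    simp only [Matrix.vecMul, dotProduct, hF, Sum.elim_inr, Pi.zero_apply] at h
    rw [conv1 _ (fun i hi => by rw [hcval0 i hi, zero_mul])]
    have hcong : (∑ i : {i : Fin k // (i:ℕ) % 2 = 1},
        c i.1 * (paperfolding (((i:Fin k):ℕ)+(j:ℕ)) : ℚ))
        = ∑ i : {i : Fin k // (i:ℕ) % 2 = 1}, c0 i * (paperfolding (((i:Fin k):ℕ)+(j:ℕ)) : ℚ) := by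
      apply Finset.sum_congr rfl
      rintro ⟨i, hi⟩ _
      rw [hcval i hi]
    rw [hcong]
    exact h

lemma det_zero (k : ℕ) (s : Finset (Fin k)) (hcard : 4 ≤ s.card)
    (hev : ∀ i ∈ s, (i:ℕ) % 2 = 0) :
    (Matrix.det (Matrix.of fun i j : Fin k => if i ∈ s then (if j = i then (1:ℤ) else 0)
      else if i = j then 0 else paperfolding ((i:ℕ)+(j:ℕ)))) = 0 := by
  set A : Matrix (Fin k) (Fin k) ℤ := Matrix.of fun i j : Fin k =>
    if i ∈ s then (if j = i then (1:ℤ) else 0)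
    else if i = j then 0 else paperfolding ((i:ℕ)+(j:ℕ)) with hA
  set A' : Matrix (Fin k) (Fin k) ℚ := A.map (Int.cast) with hA'
  suffices hdet : A'.det = 0 by
    have hmap := RingHom.map_det (Int.castRingHom ℚ) A
    rw [RingHom.mapMatrix_apply] at hmap
    have heq : A.map ⇑(Int.castRingHom ℚ) = A' := rfl
    rw [heq, hdet] at hmap
    rw [eq_intCast, Int.cast_eq_zero] at hmap
    exact hmap
  rw [← Matrix.exists_vecMul_eq_zero_iff]
  obtain ⟨c, hcne, hc0, h1, h3, hjlem⟩ := exists_relation k s hcard hev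
  set v : Fin k → ℚ := fun i => if i ∈ s then
      -(∑ i' : Fin k, c i' * (paperfolding ((i':ℕ)+(i:ℕ)) : ℚ)) else c i with hv
  refine ⟨v, ?_, ?_⟩
  · obtain ⟨i0, hi0⟩ : ∃ i0, c i0 ≠ 0 := by
      by_contra h
      push_neg at h
      exact hcne (funext h)
    have hodd : (i0:ℕ) % 2 = 1 := by
      by_contra h
      exact hi0 (hc0 i0 (by omega))
    have hns : i0 ∉ s := fun h => by have := hev i0 h; omega
    intro h0
    apply hi0
    have h6 := congrFun h0 i0
    simp only [hv, if_neg hns, Pi.zero_apply] at h6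
    exact h6
  · funext j
    have key : ∀ i : Fin k, v i * A' i j =
        (if i ∈ s then (if j = i then v i else 0) else 0)
        + c i * (if i = j then 0 else (paperfolding ((i:ℕ)+(j:ℕ)) : ℚ)) := by
      intro i
      by_cases his : i ∈ s
      · rw [hv]
        simp only [his, if_pos, hA', hA, Matrix.map_apply, Matrix.of_apply, if_pos his]
        rw [hc0 i (hev i his)]
        by_cases hji : j = i <;> simp [hji]
      · simp only [his, if_neg, hA', hA, Matrix.map_apply, Matrix.of_apply, if_neg his, hv]
        push_cast [apply_ite (fun z : ℤ => (z : ℚ))]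
        ring_nf
    have hsum : Matrix.vecMul v A' j = ∑ i : Fin k, v i * A' i j := by
      simp [Matrix.vecMul, dotProduct]
    rw [Pi.zero_apply, hsum, Finset.sum_congr rfl (fun i _ => key i), Finset.sum_add_distrib]
    have hfirst : (∑ i : Fin k, if i ∈ s then (if j = i then v i else 0) else 0)
        = if j ∈ s then v j else 0 := by
      rw [← Finset.sum_filter]
      have : Finset.univ.filter (fun i : Fin k => i ∈ s) = s := by ext i; simp
      rw [this, Finset.sum_ite_eq s j v]
    rw [hfirst]
    set U := ∑ i : Fin k, c i * (if i = j then 0 else (paperfolding ((i:ℕ)+(j:ℕ)) : ℚ)) with hU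
    by_cases hj2 : (j:ℕ) % 2 = 0
    · have hUeq : U = ∑ i : Fin k, c i * (paperfolding ((i:ℕ)+(j:ℕ)) : ℚ) := by
        apply Finset.sum_congr rfl
        intro i _
        by_cases hij : i = j
        · rw [hij, hc0 j hj2]; simp
        · rw [if_neg hij]
      by_cases hjs : j ∈ s
      · have hvj : v j = -(∑ i' : Fin k, c i' * (paperfolding ((i':ℕ)+(j:ℕ)) : ℚ)) := by
          simp only [hv, if_pos hjs]
        rw [if_pos hjs, hUeq, hvj]
        ring
      · rw [if_neg hjs, hUeq, hjlem j hj2 hjs, zero_add]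
    · have hjodd : (j:ℕ) % 2 = 1 := by omega
      have hjs : j ∉ s := fun h => by have := hev j h; omega
      rw [if_neg hjs, zero_add]
      rcases (by omega : (j:ℕ) % 4 = 1 ∨ (j:ℕ) % 4 = 3) with h4 | h4
      · have hUeq : U = ∑ i : Fin k, (if (i:ℕ) % 4 = 3 then c i else 0) := by
          apply Finset.sum_congr rfl
          intro i _
          by_cases hi2 : (i:ℕ) % 2 = 0
          · rw [hc0 i hi2, if_neg (by omega : ¬ (i:ℕ) % 4 = 3), zero_mul]
          · have hiodd : (i:ℕ) % 2 = 1 := by omega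
            by_cases hij : i = j
            · rw [if_pos hij, mul_zero, if_neg (by rw [hij]; omega)]
            · rw [if_neg hij, pf_odd_sum hiodd hjodd]
              push_cast [apply_ite (fun z : ℤ => (z : ℚ))]
              rw [if_congr (show (((i:ℕ)+(j:ℕ)) % 4 = 0) ↔ ((i:ℕ) % 4 = 3) from by omega)
                (rfl : (1:ℚ) = 1) (rfl : (0:ℚ) = 0)]
              by_cases hcnd : (i:ℕ) % 4 = 3 <;> simp [hcnd]
        rw [hUeq, h3]
      · have hUeq : U = ∑ i : Fin k, (if (i:ℕ) % 4 = 1 then c i else 0) := by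
          apply Finset.sum_congr rfl
          intro i _
          by_cases hi2 : (i:ℕ) % 2 = 0
          · rw [hc0 i hi2, if_neg (by omega : ¬ (i:ℕ) % 4 = 1), zero_mul]
          · have hiodd : (i:ℕ) % 2 = 1 := by omega
            by_cases hij : i = j
            · rw [if_pos hij, mul_zero, if_neg (by rw [hij]; omega)]
            · rw [if_neg hij, pf_odd_sum hiodd hjodd]
              push_cast [apply_ite (fun z : ℤ => (z : ℚ))]
              rw [if_congr (show (((i:ℕ)+(j:ℕ)) % 4 = 0) ↔ ((i:ℕ) % 4 = 1) from by omega)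
                (rfl : (1:ℚ) = 1) (rfl : (0:ℚ) = 0)]
              by_cases hcnd : (i:ℕ) % 4 = 1 <;> simp [hcnd]
        rw [hUeq, h1]

theorem stmt_18 (k : ℕ) (hk : 1 ≤ k) :
    ((Matrix.of fun i j : Fin k =>
        if i = j then C (paperfolding ((i : ℕ) + (j : ℕ))) * X
        else C (paperfolding ((i : ℕ) + (j : ℕ)))).det).natDegree ≤ 3 := by
  set b : Fin k → (Fin k → ℤ[X]) := fun i =>
    (C (paperfolding ((i:ℕ) + (i:ℕ))) * X) • Pi.single i (1:ℤ[X]) with hb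
  set a : Fin k → (Fin k → ℤ[X]) := fun i j =>
    C (if i = j then 0 else paperfolding ((i:ℕ)+(j:ℕ))) with ha
  have hM : (Matrix.of fun i j : Fin k =>
      if i = j then C (paperfolding ((i : ℕ) + (j : ℕ))) * X
      else C (paperfolding ((i : ℕ) + (j : ℕ)))) = Matrix.of (b + a) := by
    funext i j
    simp only [Matrix.of_apply, Pi.add_apply, hb, ha, Pi.smul_apply, smul_eq_mul]
    by_cases hij : i = j
    · subst hij
      simp [Pi.single_apply]
    · simp [hij, Pi.single_apply, Ne.symm hij]
  rw [hM]
  have hdet : (Matrix.of (b + a)).det = Matrix.detRowAlternating (b + a) := rfl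
  rw [hdet]
  have hadd : Matrix.detRowAlternating (b + a : Fin k → Fin k → ℤ[X])
      = ∑ s : Finset (Fin k),
        (Matrix.detRowAlternating (R := ℤ[X]) (n := Fin k)).toMultilinearMap (s.piecewise b a) :=
    (Matrix.detRowAlternating (R := ℤ[X]) (n := Fin k)).toMultilinearMap.map_add_univ b a
  rw [hadd]
  apply Polynomial.natDegree_sum_le_of_forall_le
  intro s _
  -- rewrite the term
  have hterm : (Matrix.detRowAlternating (R := ℤ[X]) (n := Fin k)).toMultilinearMap (s.piecewise b a)
      = (∏ i ∈ s, (C (paperfolding ((i:ℕ) + (i:ℕ))) * X))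
        • C (Matrix.det (Matrix.of fun i j : Fin k =>
            if i ∈ s then (if j = i then (1:ℤ) else 0)
            else if i = j then 0 else paperfolding ((i:ℕ)+(j:ℕ)))) := by
    have hpw : s.piecewise b a = fun i =>
        (if i ∈ s then C (paperfolding ((i:ℕ) + (i:ℕ))) * X else 1)
          • (fun j => C (if i ∈ s then (if j = i then (1:ℤ) else 0)
              else if i = j then 0 else paperfolding ((i:ℕ)+(j:ℕ)))) := by
      funext i j
      by_cases his : i ∈ s
      · simp only [Finset.piecewise, his, if_pos, hb, Pi.smul_apply, smul_eq_mul]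
        rw [Pi.single_apply]
        simp [apply_ite C]
      · simp only [Finset.piecewise, his, if_neg, ite_false, ha, Pi.smul_apply, smul_eq_mul,
          one_mul]
    rw [hpw, (Matrix.detRowAlternating (R := ℤ[X]) (n := Fin k)).toMultilinearMap.map_smul_univ]
    rw [Finset.prod_ite_mem Finset.univ s _, Finset.univ_inter]
    congr 1
    have : (fun i => (fun j => C (if i ∈ s then (if j = i then (1:ℤ) else 0)
        else if i = j then 0 else paperfolding ((i:ℕ)+(j:ℕ)))))
        = ((Matrix.of fun i j : Fin k =>
            if i ∈ s then (if j = i then (1:ℤ) else 0)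
            else if i = j then 0 else paperfolding ((i:ℕ)+(j:ℕ))).map
          (Polynomial.C : ℤ →+* ℤ[X])) := rfl
    rw [this]
    have h2 := RingHom.map_det (Polynomial.C : ℤ →+* ℤ[X])
      (Matrix.of fun i j : Fin k =>
            if i ∈ s then (if j = i then (1:ℤ) else 0)
            else if i = j then 0 else paperfolding ((i:ℕ)+(j:ℕ)))
    rw [RingHom.mapMatrix_apply] at h2
    exact h2.symm
  rw [hterm]
  by_cases hcard : s.card ≤ 3
  · rw [smul_eq_mul]
    refine le_trans (Polynomial.natDegree_mul_le) ?_
    rw [Polynomial.natDegree_C, add_zero]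
    refine le_trans (Polynomial.natDegree_prod_le _ _) ?_
    refine le_trans (Finset.sum_le_card_nsmul s _ 1 ?_) (by simpa using hcard)
    intro i _
    refine le_trans (Polynomial.natDegree_mul_le) ?_
    simp
  · push_neg at hcard
    by_cases hodd : ∃ i ∈ s, (i:ℕ) % 2 = 1
    · obtain ⟨i, his, hi⟩ := hodd
      have hz : C (paperfolding ((i:ℕ) + (i:ℕ))) * X = 0 := by
        rw [pf_diag hi]; simp
      rw [Finset.prod_eq_zero his hz, zero_smul]
      simp
    · push_neg at hodd
      have hev : ∀ i ∈ s, (i:ℕ) % 2 = 0 := fun i hi => by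
        have := hodd i hi; omega
      rw [det_zero k s (by omega) hev]
      simp
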